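/- arXiv:1707.02271 — 2 statements merged into one kernel-verified Lean document; each statement's English description precedes it below -/
import Mathlib

section
/- Let 0 ≤ θ < t ≤ T, let m, n be positive natural numbers, and let Δ^m_{θ,t} = {(s_1,…,s_m) : θ ≤ s_m < … < s_1 ≤ t}. Let S(m,n) denote the set of shuffle permutations σ of {1,…,m+n}, i.e. permutations with σ(1)<…<σ(m) and σ(m+1)<…<σ(m+n). If f : Δ^m_{θ,t} → ℝ and g : Δ^n_{θ,t} → ℝ are Lebesgue integrable, then the product of the integral of f over Δ^m_{θ,t} and the integral of g over Δ^n_{θ,t} equals the sum over σ ∈ S(m,n) of the integral over Δ^{m+n}_{θ,t} of f(s_{σ(1)},…,s_{σ(m)}) g(s_{σ(m+1)},…,s_{σ(m+n)}) ds. -/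
set_option maxHeartbeats 1000000


open MeasureTheory

/-- The open simplex `Δ^m_{θ,t} = {s : θ ≤ s_m < … < s_1 ≤ t}`, where index `0`
corresponds to `s_1` (the largest coordinate). -/
def simplex (m : ℕ) (θ t : ℝ) : Set (Fin m → ℝ) :=
  {s | (∀ i, θ ≤ s i ∧ s i ≤ t) ∧ StrictAnti s}

section Aux

lemma measurableSet_simplex (k : ℕ) (θ t : ℝ) : MeasurableSet (simplex k θ t) := by
  have h : simplex k θ t =
      (⋂ i, {s : Fin k → ℝ | θ ≤ s i} ∩ {s | s i ≤ t}) ∩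
        ⋂ (p : Fin k × Fin k), ⋂ (_ : p.1 < p.2), {s : Fin k → ℝ | s p.2 < s p.1} := by
    ext s
    simp only [simplex, Set.mem_setOf_eq, Set.mem_inter_iff, Set.mem_iInter]
    constructor
    · rintro ⟨h1, h2⟩
      exact ⟨fun i => ⟨(h1 i).1, (h1 i).2⟩, fun p hp => h2 hp⟩
    · rintro ⟨h1, h2⟩
      exact ⟨fun i => ⟨(h1 i).1, (h1 i).2⟩, fun a b hab => h2 (a, b) hab⟩
  rw [h]
  refine MeasurableSet.inter (MeasurableSet.iInter fun i => ?_)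
    (MeasurableSet.iInter fun p => MeasurableSet.iInter fun _ => ?_)
  · exact (measurableSet_le measurable_const (measurable_pi_apply i)).inter
      (measurableSet_le (measurable_pi_apply i) measurable_const)
  · exact measurableSet_lt (measurable_pi_apply _) (measurable_pi_apply _)

lemma lt_of_strictAnti_lt {N : ℕ} {u : Fin N → ℝ} (hu : StrictAnti u) {a b : Fin N}
    (h : u b < u a) : a < b := by
  rcases lt_trichotomy a b with h' | h' | h'
  · exact h'
  · subst h'; exact absurd h (lt_irrefl _)
  · exact absurd (hu h') (not_lt.2 h.le)

noncomputable def Tperm (N : ℕ) (σ : Equiv.Perm (Fin N)) : (Fin N → ℝ) ≃ᵐ (Fin N → ℝ) :=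
  MeasurableEquiv.piCongrLeft (fun _ => ℝ) σ.symm

lemma Tperm_apply (N : ℕ) (σ : Equiv.Perm (Fin N)) (u : Fin N → ℝ) :
    Tperm N σ u = fun i => u (σ i) := by
  funext j
  have := MeasurableEquiv.piCongrLeft_apply_apply (σ.symm : Fin N ≃ Fin N) (β := fun _ => ℝ) u (σ j)
  simpa [Tperm] using this

lemma Tperm_symm_apply (N : ℕ) (σ : Equiv.Perm (Fin N)) (u : Fin N → ℝ) :
    (Tperm N σ).symm u = fun i => u (σ.symm i) := by
  have h : Tperm N σ (fun i => u (σ.symm i)) = u := by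
    rw [Tperm_apply]; funext j; simp
  conv_lhs => rw [← h]
  exact (Tperm N σ).symm_apply_apply _

lemma Tperm_mp (N : ℕ) (σ : Equiv.Perm (Fin N)) : MeasurePreserving (Tperm N σ) volume volume :=
  volume_measurePreserving_piCongrLeft (fun _ => ℝ) σ.symm

noncomputable def eMN (m n : ℕ) : (Fin (m + n) → ℝ) ≃ᵐ (Fin m → ℝ) × (Fin n → ℝ) :=
  (MeasurableEquiv.piCongrLeft (fun _ => ℝ) finSumFinEquiv).symm.trans
    (MeasurableEquiv.sumPiEquivProdPi fun _ => ℝ)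

lemma eMN_apply (m n : ℕ) (u : Fin (m + n) → ℝ) :
    eMN m n u = (fun i => u (Fin.castAdd n i), fun j => u (Fin.natAdd m j)) := rfl

lemma eMN_mp (m n : ℕ) : MeasurePreserving (eMN m n) (volume : Measure (Fin (m + n) → ℝ))
    (volume : Measure ((Fin m → ℝ) × (Fin n → ℝ))) := by
  have h1 := (volume_measurePreserving_piCongrLeft (fun _ : Fin (m + n) => ℝ) finSumFinEquiv).symm
  have h2 : MeasurePreserving (MeasurableEquiv.sumPiEquivProdPi fun _ : Fin m ⊕ Fin n => ℝ)
      volume volume := by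
    have := (volume_measurePreserving_sumPiEquivProdPi_symm (fun _ : Fin m ⊕ Fin n => ℝ)).symm
      ((MeasurableEquiv.sumPiEquivProdPi fun _ => ℝ).symm)
    simpa using this
  exact h2.comp h1

lemma volume_noninjective_null (k : ℕ) :
    volume {v : Fin k → ℝ | ¬ Function.Injective v} = 0 := by
  have h1 : ∀ i j : Fin k, i ≠ j → volume {v : Fin k → ℝ | v i = v j} = 0 := by
    intro i j hij
    set ℓ : (Fin k → ℝ) →ₗ[ℝ] ℝ :=
      (LinearMap.proj i : (Fin k → ℝ) →ₗ[ℝ] ℝ) - LinearMap.proj j with hℓ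
    have hker : LinearMap.ker ℓ ≠ ⊤ := by
      intro htop
      have hmem : Pi.single i (1 : ℝ) ∈ LinearMap.ker ℓ := by
        rw [htop]; trivial
      rw [LinearMap.mem_ker, hℓ] at hmem
      simp only [LinearMap.sub_apply, LinearMap.proj_apply] at hmem
      rw [Pi.single_eq_same, Pi.single_eq_of_ne (Ne.symm hij)] at hmem
      norm_num at hmem
    have hsub : {v : Fin k → ℝ | v i = v j} ⊆ (LinearMap.ker ℓ : Submodule ℝ (Fin k → ℝ)) := by
      intro v hv
      simp only [SetLike.mem_coe, LinearMap.mem_ker, hℓ, LinearMap.sub_apply,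
        LinearMap.proj_apply, sub_eq_zero]
      exact hv
    exact measure_mono_null hsub (Measure.addHaar_submodule _ _ hker)
  have hsub : {v : Fin k → ℝ | ¬ Function.Injective v} ⊆
      ⋃ (i : Fin k), ⋃ (j : Fin k), ⋃ (_ : i ≠ j), {v : Fin k → ℝ | v i = v j} := by
    intro v hv
    simp only [Set.mem_setOf_eq, Function.Injective, not_forall] at hv
    obtain ⟨a, b, hab, hne⟩ := hv
    exact Set.mem_iUnion.2 ⟨a, Set.mem_iUnion.2 ⟨b, Set.mem_iUnion.2 ⟨hne, hab⟩⟩⟩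
  exact measure_mono_null hsub
    (measure_iUnion_null fun i => measure_iUnion_null fun j => measure_iUnion_null fun hij =>
      h1 i j hij)

end Aux

/-- Shuffle product formula: the product of integrals over the simplices `Δ^m_{θ,t}` and
`Δ^n_{θ,t}` equals the sum over shuffle permutations `σ ∈ S(m,n)` of integrals over
`Δ^{m+n}_{θ,t}`. -/
theorem integral_simplex_mul_integral_simplex_eq_sum_shuffles
    (T θ t : ℝ) (hθ : 0 ≤ θ) (hθt : θ < t) (htT : t ≤ T)
    (m n : ℕ) (hm : 0 < m) (hn : 0 < n)
    (f : (Fin m → ℝ) → ℝ) (g : (Fin n → ℝ) → ℝ)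
    (hf : IntegrableOn f (simplex m θ t))
    (hg : IntegrableOn g (simplex n θ t)) :
    (∫ s in simplex m θ t, f s) * (∫ s in simplex n θ t, g s) =
      ∑ σ ∈ Finset.univ.filter
          (fun σ : Equiv.Perm (Fin (m + n)) =>
            (∀ i j : Fin m, i < j → σ (Fin.castAdd n i) < σ (Fin.castAdd n j)) ∧
            (∀ i j : Fin n, i < j → σ (Fin.natAdd m i) < σ (Fin.natAdd m j))),
        ∫ s in simplex (m + n) θ t,
          f (fun i => s (σ (Fin.castAdd n i))) * g (fun j => s (σ (Fin.natAdd m j))) := by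
  classical
  set A := simplex m θ t with hAdef
  set B := simplex n θ t with hBdef
  set Δ := simplex (m + n) θ t with hΔdef
  have hA : MeasurableSet A := measurableSet_simplex m θ t
  have hB : MeasurableSet B := measurableSet_simplex n θ t
  have hΔ : MeasurableSet Δ := measurableSet_simplex (m + n) θ t
  set S := Finset.univ.filter
      (fun σ : Equiv.Perm (Fin (m + n)) =>
        (∀ i j : Fin m, i < j → σ (Fin.castAdd n i) < σ (Fin.castAdd n j)) ∧
        (∀ i j : Fin n, i < j → σ (Fin.natAdd m i) < σ (Fin.natAdd m j))) with hSdef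
  set H : (Fin (m + n) → ℝ) → ℝ := fun u =>
    f (fun i => u (Fin.castAdd n i)) * g (fun j => u (Fin.natAdd m j)) with hHdef
  set W : Set (Fin (m + n) → ℝ) := ⇑(eMN m n) ⁻¹' (A ×ˢ B) with hWdef
  set E : Equiv.Perm (Fin (m + n)) → Set (Fin (m + n) → ℝ) :=
    fun σ => ⇑(Tperm (m + n) σ).symm ⁻¹' Δ with hEdef
  have hW : MeasurableSet W := (eMN m n).measurable (hA.prod hB)
  have hmeasE : ∀ σ, MeasurableSet (E σ) := fun σ => (Tperm (m + n) σ).symm.measurable hΔ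
  -- membership in E σ
  have hEmem : ∀ (σ : Equiv.Perm (Fin (m + n))) (v : Fin (m + n) → ℝ),
      v ∈ E σ ↔ (fun i => v (σ.symm i)) ∈ Δ := by
    intro σ v
    rw [hEdef]
    simp only [Set.mem_preimage, Tperm_symm_apply]
  -- (a) each E σ (σ a shuffle) is contained in W
  have hEsub : ∀ σ ∈ S, E σ ⊆ W := by
    intro σ hσ v hv
    rw [hSdef, Finset.mem_filter] at hσ
    obtain ⟨-, hσ1, hσ2⟩ := hσ
    rw [hEmem] at hv
    obtain ⟨hub, hua⟩ := hv
    have hval : ∀ k, v k = (fun i => v (σ.symm i)) (σ k) := by intro k; simp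
    rw [hWdef]
    simp only [Set.mem_preimage, eMN_apply, Set.mem_prod]
    constructor
    · refine ⟨fun i => ?_, fun i j hij => ?_⟩
      · simpa using hub (σ (Fin.castAdd n i))
      · have := hua (hσ1 i j hij)
        simpa using this
    · refine ⟨fun i => ?_, fun i j hij => ?_⟩
      · simpa using hub (σ (Fin.natAdd m i))
      · have := hua (hσ2 i j hij)
        simpa using this
  -- (b) pairwise disjointness
  have hdisj : (↑S : Set (Equiv.Perm (Fin (m + n)))).Pairwise (Function.onFun Disjoint E) := by
    intro σ hσ τ hτ hne
    rw [Function.onFun, Set.disjoint_left]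
    intro v hvσ hvτ
    rw [hEmem] at hvσ hvτ
    obtain ⟨hub, hua⟩ := hvσ
    obtain ⟨hwb, hwa⟩ := hvτ
    set u : Fin (m + n) → ℝ := fun i => v (σ.symm i) with hudef
    set w : Fin (m + n) → ℝ := fun i => v (τ.symm i) with hwdef
    have hweq : ∀ k, w k = u (σ (τ.symm k)) := by intro k; simp [hudef, hwdef]
    have hρ : StrictMono (fun k => σ (τ.symm k)) := by
      intro k l hkl
      have h1 : w l < w k := hwa hkl
      rw [hweq, hweq] at h1
      exact lt_of_strictAnti_lt hua h1
    haveI : WellFoundedLT (Fin (m + n)) := inferInstance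
    have hid : (fun k => σ (τ.symm k)) = id := by
      refine (hρ.range_inj strictMono_id).1 ?_
      rw [Set.range_id]
      exact Set.range_eq_univ.2 (σ.surjective.comp τ.symm.surjective)
    apply hne
    refine Equiv.ext fun x => ?_
    have := congrFun hid (τ x)
    simpa using this
  -- (c) covering up to a null set
  have hcover : W \ (⋃ σ ∈ S, E σ) ⊆ {v : Fin (m + n) → ℝ | ¬ Function.Injective v} := by
    intro v hv
    obtain ⟨hvW, hvnot⟩ := hv
    by_contra hinj
    simp only [Set.mem_setOf_eq, not_not] at hinj
    apply hvnot
    rw [hWdef] at hvW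
    simp only [Set.mem_preimage, eMN_apply, Set.mem_prod] at hvW
    obtain ⟨⟨hAb, hAa⟩, ⟨hBb, hBa⟩⟩ := hvW
    set π := Tuple.sort (fun i => -v i) with hπdef
    set u : Fin (m + n) → ℝ := fun i => v (π i) with hudef
    have hmono : Antitone u := by
      intro a b hab
      have := Tuple.monotone_sort (fun i => -v i) hab
      simpa [hudef] using this
    have huinj : Function.Injective u := hinj.comp π.injective
    have hua : StrictAnti u := by
      intro a b hab
      rcases lt_or_eq_of_le (hmono hab.le) with h | h
      · exact h
      · exact absurd (huinj h) hab.ne'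
    have hub : ∀ k, θ ≤ u k ∧ u k ≤ t := by
      intro k
      refine Fin.addCases (motive := fun k => θ ≤ v k ∧ v k ≤ t) ?_ ?_ (π k)
      · exact fun i => hAb i
      · exact fun j => hBb j
    have huΔ : u ∈ Δ := ⟨hub, hua⟩
    set σ : Equiv.Perm (Fin (m + n)) := π⁻¹ with hσdef
    have hσS : σ ∈ S := by
      rw [hSdef, Finset.mem_filter]
      refine ⟨Finset.mem_univ _, fun i j hij => ?_, fun i j hij => ?_⟩
      · have h1 : v (Fin.castAdd n j) < v (Fin.castAdd n i) := hAa hij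
        have h2 : ∀ k, u (σ k) = v k := by
          intro k; simp [hudef, hσdef, Equiv.Perm.inv_def]
        rw [← h2, ← h2] at h1
        exact lt_of_strictAnti_lt hua h1
      · have h1 : v (Fin.natAdd m j) < v (Fin.natAdd m i) := hBa hij
        have h2 : ∀ k, u (σ k) = v k := by
          intro k; simp [hudef, hσdef, Equiv.Perm.inv_def]
        rw [← h2, ← h2] at h1
        exact lt_of_strictAnti_lt hua h1
    refine Set.mem_biUnion hσS ?_
    rw [hEmem]
    have : (fun i => v (σ.symm i)) = u := by
      funext i; simp [hudef, hσdef, Equiv.Perm.inv_def]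
    rw [this]
    exact huΔ
  -- measure-theoretic steps
  have heq_meas : ((volume : Measure (Fin m → ℝ)).restrict A).prod
      ((volume : Measure (Fin n → ℝ)).restrict B) =
      (volume : Measure ((Fin m → ℝ) × (Fin n → ℝ))).restrict (A ×ˢ B) := by
    rw [Measure.prod_restrict, ← Measure.volume_eq_prod]
  have hInt : Integrable (fun p : (Fin m → ℝ) × (Fin n → ℝ) => f p.1 * g p.2)
      (volume.restrict (A ×ˢ B)) := by
    rw [← heq_meas]
    exact Integrable.mul_prod hf hg
  have he := eMN_mp m n
  have hemb := (eMN m n).measurableEmbedding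
  have step1 : (∫ s in A, f s) * (∫ s in B, g s) =
      ∫ p in A ×ˢ B, f p.1 * g p.2 := by
    rw [← integral_prod_mul f g, heq_meas]
  have step2 : ∫ p in A ×ˢ B, f p.1 * g p.2 = ∫ u in W, H u := by
    rw [hWdef]
    exact (he.setIntegral_preimage_emb hemb (fun p => f p.1 * g p.2) (A ×ˢ B)).symm
  have hHW : IntegrableOn H W := by
    have hmp : MeasurePreserving (eMN m n) (volume.restrict W) (volume.restrict (A ×ˢ B)) := by
      refine ⟨(eMN m n).measurable, ?_⟩
      rw [hWdef]
      rw [← Measure.restrict_map (eMN m n).measurable (hA.prod hB), (eMN_mp m n).map_eq]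
    exact (hmp.integrable_comp_emb hemb).2 hInt
  have hWae : W =ᵐ[volume] ⋃ σ ∈ S, E σ := by
    rw [MeasureTheory.ae_eq_set]
    constructor
    · exact measure_mono_null hcover (volume_noninjective_null (m + n))
    · have : (⋃ σ ∈ S, E σ) \ W = ∅ := by
        rw [Set.diff_eq_empty]
        exact Set.iUnion₂_subset hEsub
      rw [this]; exact measure_empty
  have step3 : ∫ u in W, H u = ∑ σ ∈ S, ∫ u in E σ, H u := by
    rw [setIntegral_congr_set hWae]
    exact integral_biUnion_finset S (fun σ _ => hmeasE σ) hdisj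
      (fun σ hσ => hHW.mono_set (hEsub σ hσ))
  have step4 : ∀ σ ∈ S, ∫ u in E σ, H u =
      ∫ s in Δ, f (fun i => s (σ (Fin.castAdd n i))) * g (fun j => s (σ (Fin.natAdd m j))) := by
    intro σ hσ
    have hpre : ⇑(Tperm (m + n) σ) ⁻¹' (E σ) = Δ := by
      rw [hEdef]
      rw [← Set.preimage_comp]
      have : ⇑(Tperm (m + n) σ).symm ∘ ⇑(Tperm (m + n) σ) = id := by
        funext x; simp
      rw [this, Set.preimage_id]
    have := (Tperm_mp (m + n) σ).setIntegral_preimage_emb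
      (Tperm (m + n) σ).measurableEmbedding H (E σ)
    rw [← this, hpre]
    apply setIntegral_congr_fun hΔ
    intro s _
    simp only [hHdef, Tperm_apply]
  rw [step1, step2, step3]
  exact Finset.sum_congr rfl step4
end

section
/- Let (Ω, 𝒜, P) be a probability space, X ∈ L²(Ω, 𝒜, P), and ℱ ⊆ 𝒜 a sub-σ-algebra. If for every bounded continuous function φ : ℝ → ℝ one has φ(E[X|ℱ]) = E[φ(X)|ℱ] almost surely, then X is (almost surely equal to an) ℱ-measurable random variable; in fact X = E[X|ℱ] almost surely. -/
open MeasureTheory Real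

/-- If for every bounded continuous `φ : ℝ → ℝ` one has `φ(E[X|ℱ]) = E[φ(X)|ℱ]` a.s.,
then `X = E[X|ℱ]` a.s.; in particular `X` is a.s. equal to an `ℱ`-measurable
random variable. -/
theorem ae_eq_condexp_of_comp_condexp_eq {Ω : Type*} {mΩ : MeasurableSpace Ω}
    (P : Measure Ω) [IsProbabilityMeasure P]
    (F : MeasurableSpace Ω) (hF : F ≤ mΩ)
    (X : Ω → ℝ) (hX : MemLp X 2 P)
    (h : ∀ φ : ℝ → ℝ, Continuous φ → (∃ C, ∀ x, |φ x| ≤ C) →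
      (fun ω => φ ((P[X|F]) ω)) =ᵐ[P] P[(fun ω => φ (X ω))|F]) :
    X =ᵐ[P] P[X|F] := by
  set Y : Ω → ℝ := P[X|F] with hY
  have hYsm : StronglyMeasurable[F] Y := stronglyMeasurable_condExp
  have hXm : AEStronglyMeasurable[mΩ] X P := hX.aestronglyMeasurable
  have hYm : AEStronglyMeasurable[mΩ] Y P := (hYsm.mono hF).aestronglyMeasurable
  -- bounded measurable functions are integrable
  have key : ∀ (f : Ω → ℝ) (C : ℝ), AEStronglyMeasurable[mΩ] f P → (∀ ω, |f ω| ≤ C) →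
      Integrable f P := by
    intro f C hf hb
    exact (memLp_top_of_bound hf C (Filter.Eventually.of_forall fun ω => by
      simpa [Real.norm_eq_abs] using hb ω)).integrable le_top
  have harctan_bdd : ∀ x : ℝ, |arctan x| ≤ π / 2 := fun x =>
    abs_le.mpr ⟨(neg_pi_div_two_lt_arctan x).le, (arctan_lt_pi_div_two x).le⟩
  have hsq_bdd : ∀ x : ℝ, |arctan x ^ 2| ≤ (π / 2) ^ 2 := fun x => by
    rw [abs_pow]
    exact pow_le_pow_left₀ (abs_nonneg _) (harctan_bdd x) 2
  set a : Ω → ℝ := fun ω => arctan (X ω) with ha_def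
  set b : Ω → ℝ := fun ω => arctan (Y ω) with hb_def
  have h1 : b =ᵐ[P] P[a|F] := h arctan continuous_arctan ⟨π / 2, harctan_bdd⟩
  have h2 : (fun ω => arctan (Y ω) ^ 2) =ᵐ[P] P[(fun ω => arctan (X ω) ^ 2)|F] :=
    h (fun x => arctan x ^ 2) (continuous_arctan.pow 2) ⟨(π / 2) ^ 2, hsq_bdd⟩
  have ham : AEStronglyMeasurable[mΩ] a P := continuous_arctan.comp_aestronglyMeasurable hXm
  have hbm : AEStronglyMeasurable[mΩ] b P := continuous_arctan.comp_aestronglyMeasurable hYm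
  have ha : Integrable a P := key a (π / 2) ham fun ω => harctan_bdd _
  have hb : Integrable b P := key b (π / 2) hbm fun ω => harctan_bdd _
  have ha2 : Integrable (fun ω => a ω ^ 2) P :=
    key _ ((π / 2) ^ 2) (ham.pow 2) fun ω => hsq_bdd _
  have hb2 : Integrable (fun ω => b ω ^ 2) P :=
    key _ ((π / 2) ^ 2) (hbm.pow 2) fun ω => hsq_bdd _
  have hba : Integrable (fun ω => b ω * a ω) P := by
    refine key _ ((π / 2) * (π / 2)) (hbm.mul ham) fun ω => ?_
    rw [abs_mul]
    exact mul_le_mul (harctan_bdd _) (harctan_bdd _) (abs_nonneg _)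
      (by positivity)
  have hbsm : StronglyMeasurable[F] b :=
    continuous_arctan.comp_stronglyMeasurable hYsm
  -- ∫ a² = ∫ b²
  have Ia2 : ∫ ω, a ω ^ 2 ∂P = ∫ ω, b ω ^ 2 ∂P := by
    rw [← integral_condExp (μ := P) (f := fun ω => a ω ^ 2) hF]
    exact (integral_congr_ae h2.symm)
  -- ∫ b·a = ∫ b²
  have Iba : ∫ ω, b ω * a ω ∂P = ∫ ω, b ω ^ 2 ∂P := by
    have hmul : P[(fun ω => b ω * a ω)|F] =ᵐ[P] fun ω => b ω * (P[a|F]) ω := by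
      have := condExp_mul_of_stronglyMeasurable_left (μ := P) hbsm hba ha
      filter_upwards [this] with ω hω using hω
    rw [← integral_condExp (μ := P) (f := fun ω => b ω * a ω) hF, integral_congr_ae hmul]
    refine integral_congr_ae ?_
    filter_upwards [h1] with ω hω
    rw [← hω]; ring
  -- ∫ (a − b)² = 0
  have hd2 : Integrable (fun ω => (a ω - b ω) ^ 2) P := by
    refine key _ (π ^ 2) ((ham.sub hbm).pow 2) fun ω => ?_
    rw [abs_pow]
    refine pow_le_pow_left₀ (abs_nonneg _) ?_ 2
    calc |a ω - b ω| ≤ |a ω| + |b ω| := abs_sub _ _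
      _ ≤ π / 2 + π / 2 := add_le_add (harctan_bdd _) (harctan_bdd _)
      _ = π := by ring
  have hzero : ∫ ω, (a ω - b ω) ^ 2 ∂P = 0 := by
    have expand : (fun ω => (a ω - b ω) ^ 2)
        = fun ω => a ω ^ 2 - 2 * (b ω * a ω) + b ω ^ 2 := by
      funext ω; ring
    have i2 : Integrable (fun ω => 2 * (b ω * a ω)) P := hba.const_mul 2
    have i1 : Integrable (fun ω => a ω ^ 2 - 2 * (b ω * a ω)) P := ha2.sub i2
    rw [expand, integral_add i1 hb2, integral_sub ha2 i2, integral_const_mul, Ia2, Iba]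
    ring
  have hae : (fun ω => (a ω - b ω) ^ 2) =ᵐ[P] 0 :=
    (integral_eq_zero_iff_of_nonneg_ae
      (Filter.Eventually.of_forall fun ω => sq_nonneg _) hd2).mp hzero
  filter_upwards [hae] with ω hω
  have : a ω = b ω := by
    have h0 : (a ω - b ω) ^ 2 = 0 := hω
    have := pow_eq_zero_iff (n := 2) (by norm_num) |>.mp h0
    linarith [sub_eq_zero.mp this]
  exact arctan_injective this
end
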